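/- Let q ∈ {1,-1} and A = [[-qJ, I],[-I, -qJ]] with J = [[0,1],[-1,0]]. Then (1/2π)∫₀^{2π} exp(-τA) dτ = (1/2)·[[I, -qJ],[qJ, I]]. -/

import Mathlib

open scoped Matrix

/-- `J` is the standard 2×2 rotation generator. -/
noncomputable def J : Matrix (Fin 2) (Fin 2) ℝ := !![0, 1; -1, 0]

/-- The 4×4 block matrix `A = [[-qJ, I],[-I, -qJ]]`. -/
noncomputable def A (q : ℝ) : Matrix (Fin 2 ⊕ Fin 2) (Fin 2 ⊕ Fin 2) ℝ :=
  Matrix.fromBlocks (-(q • J)) 1 (-1) (-(q • J))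

section aux

variable {n : Type*} [Fintype n] [DecidableEq n]

/-- The algebra map `ℂ → Matrix n n ℝ` induced by a square root of `-1`. -/
noncomputable def cAlgHom (M : Matrix n n ℝ) (h : M * M = -1) :
    ℂ →ₐ[ℝ] Matrix n n ℝ where
  toFun z := z.re • (1 : Matrix n n ℝ) + z.im • M
  map_one' := by simp
  map_mul' z w := by
    simp only [Complex.mul_re, Complex.mul_im]
    rw [add_mul, mul_add, mul_add, smul_mul_smul_comm, smul_mul_smul_comm,
      smul_mul_smul_comm, smul_mul_smul_comm]
    simp only [one_mul, mul_one, h]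
    module
  map_zero' := by simp
  map_add' z w := by
    simp only [Complex.add_re, Complex.add_im]
    module
  commutes' r := by
    simp [Algebra.algebraMap_eq_smul_one]

theorem exp_smul_of_sq_eq_neg_one (M : Matrix n n ℝ) (h : M * M = -1) (s : ℝ) :
    NormedSpace.exp (s • M) = Real.cos s • (1 : Matrix n n ℝ) + Real.sin s • M := by
  letI : SeminormedRing (Matrix n n ℝ) := Matrix.linftyOpSemiNormedRing
  letI : NormedRing (Matrix n n ℝ) := Matrix.linftyOpNormedRing
  letI : NormedAlgebra ℝ (Matrix n n ℝ) := Matrix.linftyOpNormedAlgebra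
  have hcont : Continuous (cAlgHom M h) := by
    show Continuous fun z : ℂ => z.re • (1 : Matrix n n ℝ) + z.im • M
    exact (Complex.continuous_re.smul continuous_const).add
      (Complex.continuous_im.smul continuous_const)
  have h1 : (s • M) = cAlgHom M h (s • Complex.I) := by
    show s • M = (s • Complex.I).re • (1 : Matrix n n ℝ) + (s • Complex.I).im • M
    simp [Complex.smul_re, Complex.smul_im]
  rw [h1]
  refine (NormedSpace.map_exp (cAlgHom M h) hcont _).symm.trans ?_
  have h2 : NormedSpace.exp (s • Complex.I) = Complex.exp (s * Complex.I) := by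
    rw [Complex.exp_eq_exp_ℂ]
    norm_num [Complex.real_smul]
  rw [h2, Complex.exp_mul_I]
  show (Complex.cos s + Complex.sin s * Complex.I).re • (1 : Matrix n n ℝ) +
      (Complex.cos s + Complex.sin s * Complex.I).im • M = _
  simp [Complex.add_re, Complex.add_im, Complex.cos_ofReal_re, Complex.sin_ofReal_re,
    Complex.cos_ofReal_im, Complex.sin_ofReal_im]

end aux

/-- block diagonal `J`. -/
noncomputable def Jd : Matrix (Fin 2 ⊕ Fin 2) (Fin 2 ⊕ Fin 2) ℝ :=
  Matrix.fromBlocks J 0 0 J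

/-- the big symplectic block matrix. -/
noncomputable def K : Matrix (Fin 2 ⊕ Fin 2) (Fin 2 ⊕ Fin 2) ℝ :=
  Matrix.fromBlocks 0 1 (-1) 0

/-- the product `Jd * K`. -/
noncomputable def L : Matrix (Fin 2 ⊕ Fin 2) (Fin 2 ⊕ Fin 2) ℝ :=
  Matrix.fromBlocks 0 J (-J) 0

theorem J_sq : J * J = -1 := by
  simp [J]
  ext i j
  fin_cases i <;> fin_cases j <;>
    simp [Matrix.mul_apply, Fin.sum_univ_two, Matrix.one_apply]

theorem Jd_sq : Jd * Jd = -1 := by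
  simp only [Jd, Matrix.fromBlocks_multiply]
  simp [J_sq, ← Matrix.fromBlocks_one, Matrix.fromBlocks_neg]

theorem K_sq : K * K = -1 := by
  simp only [K, Matrix.fromBlocks_multiply]
  simp [← Matrix.fromBlocks_one, Matrix.fromBlocks_neg]

theorem JdK : Jd * K = L := by
  simp only [Jd, K, L, Matrix.fromBlocks_multiply]
  simp

theorem KJd : K * Jd = L := by
  simp only [Jd, K, L, Matrix.fromBlocks_multiply]
  simp

theorem A_eq (q : ℝ) : A q = -(q • Jd) + K := by
  simp only [A, Jd, K, Matrix.fromBlocks_smul, Matrix.fromBlocks_neg,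
    Matrix.fromBlocks_add]
  simp

theorem exp_formula (q : ℝ) (hq : q = 1 ∨ q = -1) (τ : ℝ) :
    NormedSpace.exp (-(τ • A q)) =
      (Real.cos τ * Real.cos τ) • (1 : Matrix (Fin 2 ⊕ Fin 2) (Fin 2 ⊕ Fin 2) ℝ)
        - (Real.cos τ * Real.sin τ) • K + (q * (Real.sin τ * Real.cos τ)) • Jd
        - (q * (Real.sin τ * Real.sin τ)) • L := by
  have hq2 : q * q = 1 := by rcases hq with h | h <;> rw [h] <;> norm_num
  have h1 : -(τ • A q) = (τ * q) • Jd + (-τ) • K := by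
    rw [A_eq]; module
  have hcomm : Commute ((τ * q) • Jd) ((-τ) • K) := by
    apply Commute.smul_left
    apply Commute.smul_right
    show Jd * K = K * Jd
    rw [JdK, KJd]
  rw [h1, Matrix.exp_add_of_commute _ _ hcomm,
    exp_smul_of_sq_eq_neg_one Jd Jd_sq, exp_smul_of_sq_eq_neg_one K K_sq]
  have hcos : Real.cos (τ * q) = Real.cos τ := by
    rcases hq with h | h <;> rw [h] <;> simp
  have hsin : Real.sin (τ * q) = q * Real.sin τ := by
    rcases hq with h | h <;> rw [h] <;> simp
  rw [hcos, hsin, Real.cos_neg, Real.sin_neg]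
  rw [add_mul, mul_add, mul_add, smul_mul_smul_comm, smul_mul_smul_comm,
    smul_mul_smul_comm, smul_mul_smul_comm]
  simp only [one_mul, mul_one, JdK]
  module

/-- For `q = ±1`, the entrywise average of `exp(-τA)` over `τ ∈ [0, 2π]` equals
`(1/2)·[[I, -qJ],[qJ, I]]`. -/
theorem stmt6 (q : ℝ) (hq : q = 1 ∨ q = -1) (i j : Fin 2 ⊕ Fin 2) :
    (1 / (2 * Real.pi)) * ∫ τ in (0:ℝ)..(2 * Real.pi),
        (NormedSpace.exp (-(τ • A q))) i j
      = ((1 / 2 : ℝ) • Matrix.fromBlocks 1 (-(q • J)) (q • J) 1) i j := by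
  have hint : ∫ τ in (0:ℝ)..(2 * Real.pi), (NormedSpace.exp (-(τ • A q))) i j
      = ∫ τ in (0:ℝ)..(2 * Real.pi),
        ((1 : Matrix (Fin 2 ⊕ Fin 2) (Fin 2 ⊕ Fin 2) ℝ) i j * Real.cos τ ^ 2
          - K i j * (Real.sin τ * Real.cos τ)
          + q * Jd i j * (Real.sin τ * Real.cos τ)
          - q * L i j * Real.sin τ ^ 2) := by
    apply intervalIntegral.integral_congr
    intro τ _
    dsimp only
    rw [exp_formula q hq τ]
    simp only [Matrix.sub_apply, Matrix.add_apply, Matrix.smul_apply, smul_eq_mul]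
    ring
  rw [hint]
  have I1 : IntervalIntegrable
      (fun τ => (1 : Matrix (Fin 2 ⊕ Fin 2) (Fin 2 ⊕ Fin 2) ℝ) i j * Real.cos τ ^ 2)
      MeasureTheory.volume 0 (2 * Real.pi) := by
    apply Continuous.intervalIntegrable; continuity
  have I2 : IntervalIntegrable (fun τ => K i j * (Real.sin τ * Real.cos τ))
      MeasureTheory.volume 0 (2 * Real.pi) := by
    apply Continuous.intervalIntegrable; continuity
  have I3 : IntervalIntegrable (fun τ => q * Jd i j * (Real.sin τ * Real.cos τ))
      MeasureTheory.volume 0 (2 * Real.pi) := by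
    apply Continuous.intervalIntegrable; continuity
  have I4 : IntervalIntegrable (fun τ => q * L i j * Real.sin τ ^ 2)
      MeasureTheory.volume 0 (2 * Real.pi) := by
    apply Continuous.intervalIntegrable; continuity
  rw [intervalIntegral.integral_sub (((I1.sub I2).add I3)) I4,
    intervalIntegral.integral_add (I1.sub I2) I3,
    intervalIntegral.integral_sub I1 I2,
    intervalIntegral.integral_const_mul, intervalIntegral.integral_const_mul,
    intervalIntegral.integral_const_mul, intervalIntegral.integral_const_mul,
    integral_cos_sq, integral_sin_sq, integral_sin_mul_cos₁]
  have hL : ((1/2 : ℝ) • Matrix.fromBlocks 1 (-(q • J)) (q • J) 1) i j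
      = (1/2 : ℝ) * ((1 : Matrix (Fin 2 ⊕ Fin 2) (Fin 2 ⊕ Fin 2) ℝ) i j - q * L i j) := by
    have : (Matrix.fromBlocks 1 (-(q • J)) (q • J) 1 :
        Matrix (Fin 2 ⊕ Fin 2) (Fin 2 ⊕ Fin 2) ℝ)
        = 1 - q • L := by
      rw [sub_eq_add_neg]
      simp only [L, Matrix.fromBlocks_smul, ← Matrix.fromBlocks_one, Matrix.fromBlocks_neg,
        Matrix.fromBlocks_add]
      simp
    rw [this]
    simp [Matrix.sub_apply]
    try ring
  rw [hL]
  have hπ : Real.pi ≠ 0 := Real.pi_ne_zero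
  simp [Real.sin_two_pi, Real.cos_two_pi]
  field_simp
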